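/- For every (n, Fin k)-expression A, let F(A) := ⋃_{X ≤ A in M̂ₙ(Fin k)} G(X), with the subspace topology from 𝒞ₙ(k). Then the subspace G(A) ⊆ F(A) is a strong deformation retract of F(A) (there is a homotopy rel G(A) from the identity of F(A) to a retraction onto G(A)); in particular F(A) is a contractible space. -/

import Mathlib

/-- Formal `(n, Fin k)`-expressions: binary trees whose leaves are labeled by
generators and whose internal nodes are labeled by one of the `n` operations.
Expressions are considered up to the strict associativity of each operation,
via the relation `W.equiv` below. -/
inductive W (n k : ℕ) : Type
  | leaf : Fin k → W n k
  | node : Fin n → W n k → W n k → W n k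

namespace W

variable {n k : ℕ}

/-- The list of leaf labels, from left to right. -/
def leaves : W n k → List (Fin k)
  | leaf a => [a]
  | node _ A B => A.leaves ++ B.leaves

/-- `A.Exact T`: the expression `A` uses each element of `T` exactly once and
no other generators. -/
def Exact (A : W n k) (T : Finset (Fin k)) : Prop :=
  A.leaves.Nodup ∧ A.leaves.toFinset = T

/-- `A.inRel a b i` means `a □ᵢ b` in `A`: the lowest common "ancestor" node of the
leaves `a` and `b` carries the operation `i`, with `a` to the left of `b`. -/
def inRel : W n k → Fin k → Fin k → Fin n → Prop
  | leaf _, _, _, _ => False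
  | node j A B, a, b, i => A.inRel a b i ∨ B.inRel a b i ∨ (j = i ∧ a ∈ A.leaves ∧ b ∈ B.leaves)

/-- The order relation of the poset `M̂ₙ`: `A ≤ B` iff whenever `a □ᵢ b` in `A`,
either `a □ⱼ b` in `B` for some `j ≥ i`, or `b □ⱼ a` in `B` for some `j > i`. -/
def le (A B : W n k) : Prop :=
  ∀ a b : Fin k, a ≠ b → ∀ i : Fin n, A.inRel a b i →
    ∃ j : Fin n, (i ≤ j ∧ B.inRel a b j) ∨ (i < j ∧ B.inRel b a j)

/-- One step of the associativity/congruence relation on expressions. -/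
inductive Step : W n k → W n k → Prop
  | assoc (i : Fin n) (A B C : W n k) :
      Step (node i (node i A B) C) (node i A (node i B C))
  | congr_left (i : Fin n) {A A' : W n k} (B : W n k) :
      Step A A' → Step (node i A B) (node i A' B)
  | congr_right (i : Fin n) (A : W n k) {B B' : W n k} :
      Step B B' → Step (node i A B) (node i A B')

/-- Equality of expressions (strict associativity of each operation). -/
def equiv (A B : W n k) : Prop := Relation.EqvGen Step A B

/-- Restriction of an expression to the leaves satisfying `p`
(`none` if no leaf survives). -/
def restrict : W n k → (Fin k → Bool) → Option (W n k)
  | leaf a, p => if p a then some (leaf a) else none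
  | node i A B, p =>
    match A.restrict p, B.restrict p with
    | some A', some B' => some (node i A' B')
    | some A', none => some A'
    | none, o => o

end W

/-- Joining two possibly-empty expressions by the operation `i`, with the convention
that the empty expression is a unit. -/
def onode {n k : ℕ} (i : Fin n) : Option (W n k) → Option (W n k) → Option (W n k)
  | some A, some B => some (W.node i A B)
  | some A, none => some A
  | none, o => o

/-- Equality of possibly-empty expressions. -/
def OEquiv {n k : ℕ} : Option (W n k) → Option (W n k) → Prop
  | none, none => True
  | some A, some B => A.equiv B
  | _, _ => False

/-- `A − T`: the expression `A` with the leaves belonging to `T` deleted. -/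
def diffR {n k : ℕ} (A : W n k) (T : Finset (Fin k)) : Option (W n k) :=
  A.restrict fun a => decide (a ∉ T)

/-- The open box (interior) of the `a`-th little `n`-cube of a pair `c = (u, v)`. -/
def cubeInterior (n k : ℕ) (c : (Fin k → Fin n → ℝ) × (Fin k → Fin n → ℝ)) (a : Fin k) :
    Set (Fin n → ℝ) :=
  Set.univ.pi fun i => Set.Ioo (c.1 a i) (c.2 a i)

/-- `c = (u, v)` is a configuration of `k` little `n`-cubes. -/
def IsConfig (n k : ℕ) (c : (Fin k → Fin n → ℝ) × (Fin k → Fin n → ℝ)) : Prop :=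
  (∀ a i, 0 ≤ c.1 a i ∧ c.1 a i < c.2 a i ∧ c.2 a i ≤ 1) ∧
  ∀ a b : Fin k, a ≠ b → Disjoint (cubeInterior n k c a) (cubeInterior n k c b)

/-- `G(A)`: the configurations whose cubes are separated as prescribed by the
expression `A`. -/
def Gset (n k : ℕ) (A : W n k) : Set ((Fin k → Fin n → ℝ) × (Fin k → Fin n → ℝ)) :=
  {c | IsConfig n k c ∧ ∀ a b i, A.inRel a b i → c.2 a i ≤ c.1 b i}

/-- `F(A) = ⋃_{X ≤ A} G(X)`, the union over all expressions `X` on the full set of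
generators mapping into `A` in the poset `M̂ₙ(Fin k)`. -/
def Fset (n k : ℕ) (A : W n k) : Set ((Fin k → Fin n → ℝ) × (Fin k → Fin n → ℝ)) :=
  ⋃ (X : W n k) (_ : X.Exact Finset.univ ∧ X.le A), Gset n k X

namespace W

variable {n k : ℕ}

theorem leaves_ne_nil (A : W n k) : A.leaves ≠ [] := by
  induction A with
  | leaf a => simp [leaves]
  | node j L R ihl ihr => simp only [leaves, ne_eq, List.append_eq_nil_iff]; tauto

theorem inRel_mem {A : W n k} {a b : Fin k} {i : Fin n} (h : A.inRel a b i) :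
    a ∈ A.leaves ∧ b ∈ A.leaves := by
  induction A with
  | leaf c => exact h.elim
  | node j L R ihl ihr =>
    rcases h with h | h | ⟨_, ha, hb⟩
    · exact ⟨List.mem_append_left _ (ihl h).1, List.mem_append_left _ (ihl h).2⟩
    · exact ⟨List.mem_append_right _ (ihr h).1, List.mem_append_right _ (ihr h).2⟩
    · exact ⟨List.mem_append_left _ ha, List.mem_append_right _ hb⟩

theorem nodup_left {j : Fin n} {L R : W n k} (h : (node j L R).leaves.Nodup) :
    L.leaves.Nodup := (List.nodup_append.1 h).1

theorem nodup_right {j : Fin n} {L R : W n k} (h : (node j L R).leaves.Nodup) :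
    R.leaves.Nodup := (List.nodup_append.1 h).2.1

theorem nodup_disj {j : Fin n} {L R : W n k} (h : (node j L R).leaves.Nodup) :
    ∀ a ∈ L.leaves, a ∉ R.leaves := by
  have h2 := (List.nodup_append.1 h).2.2
  intro a ha hb
  exact h2 a ha a hb rfl

theorem exists_inRel {A : W n k} (hnd : A.leaves.Nodup) {a b : Fin k}
    (ha : a ∈ A.leaves) (hb : b ∈ A.leaves) (hab : a ≠ b) :
    ∃ i, A.inRel a b i ∨ A.inRel b a i := by
  induction A with
  | leaf c =>
    simp [leaves] at ha hb; exact absurd (ha.trans hb.symm) hab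
  | node j L R ihl ihr =>
    rcases List.mem_append.1 ha with ha' | ha' <;> rcases List.mem_append.1 hb with hb' | hb'
    · obtain ⟨i, h⟩ := ihl (nodup_left hnd) ha' hb'
      exact ⟨i, h.imp Or.inl Or.inl⟩
    · exact ⟨j, Or.inl (Or.inr (Or.inr ⟨rfl, ha', hb'⟩))⟩
    · exact ⟨j, Or.inr (Or.inr (Or.inr ⟨rfl, hb', ha'⟩))⟩
    · obtain ⟨i, h⟩ := ihr (nodup_right hnd) ha' hb'
      exact ⟨i, h.imp (fun h => Or.inr (Or.inl h)) (fun h => Or.inr (Or.inl h))⟩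

theorem node_inRel_left {j : Fin n} {L R : W n k} (hnd : (node j L R).leaves.Nodup)
    {a b : Fin k} (ha : a ∈ L.leaves) (hb : b ∈ L.leaves) {i : Fin n} :
    (node j L R).inRel a b i ↔ L.inRel a b i := by
  constructor
  · rintro (h | h | ⟨rfl, ha', hb'⟩)
    · exact h
    · exact absurd (inRel_mem h).2 (nodup_disj hnd b hb)
    · exact absurd hb' (nodup_disj hnd b hb)
  · exact Or.inl

theorem restrict_eq_none {A : W n k} {p : Fin k → Bool} :
    A.restrict p = none ↔ ∀ a ∈ A.leaves, p a = false := by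
  induction A with
  | leaf c => by_cases h : p c <;> simp [restrict, leaves, h]
  | node j L R ihl ihr =>
    simp only [restrict, leaves, List.forall_mem_append]
    cases hL : L.restrict p <;> cases hR : R.restrict p
    · exact iff_of_true rfl ⟨ihl.1 hL, ihr.1 hR⟩
    · refine iff_of_false (by simp) (fun h => ?_)
      rw [ihr.2 h.2] at hR; exact absurd hR (by simp)
    · refine iff_of_false (by simp) (fun h => ?_)
      rw [ihl.2 h.1] at hL; exact absurd hL (by simp)
    · refine iff_of_false (by simp) (fun h => ?_)
      rw [ihl.2 h.1] at hL; exact absurd hL (by simp)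

theorem leaves_restrict {A : W n k} {p : Fin k → Bool} :
    ∀ {A' : W n k}, A.restrict p = some A' → A'.leaves = A.leaves.filter p := by
  induction A with
  | leaf c =>
    intro A' h
    by_cases hp : p c <;> simp_all [restrict, leaves]
    subst h; simp [leaves]
  | node j L R ihl ihr =>
    intro A' h
    simp only [restrict] at h
    cases hL : L.restrict p <;> cases hR : R.restrict p <;> rw [hL, hR] at h
    · exact absurd h (by simp)
    · cases h
      rw [leaves, List.filter_append, ihr hR,
        show L.leaves.filter p = [] from List.filter_eq_nil_iff.2 (fun a ha => by simp [restrict_eq_none.1 hL a ha])]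
      simp
    · cases h
      rw [leaves, List.filter_append, ihl hL,
        show R.leaves.filter p = [] from List.filter_eq_nil_iff.2 (fun a ha => by simp [restrict_eq_none.1 hR a ha])]
      simp
    · cases h
      rw [leaves, leaves, List.filter_append, ihl hL, ihr hR]

theorem inRel_restrict {A : W n k} {p : Fin k → Bool} :
    ∀ {A' : W n k}, A.leaves.Nodup → A.restrict p = some A' →
    ∀ {a b : Fin k} {i : Fin n}, p a → p b →
    (A'.inRel a b i ↔ A.inRel a b i) := by
  induction A with
  | leaf c =>
    intro A' _ h a b i hpa hpb
    by_cases hp : p c <;> simp_all [restrict]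
  | node j L R ihl ihr =>
    intro A' hnd h a b i hpa hpb
    simp only [restrict] at h
    cases hL : L.restrict p <;> cases hR : R.restrict p <;> rw [hL, hR] at h
    · exact absurd h (by simp)
    · cases h
      constructor
      · intro h'
        exact Or.inr (Or.inl ((ihr (nodup_right hnd) hR hpa hpb).1 h'))
      · rintro (h' | h' | ⟨rfl, ha, hb⟩)
        · exact absurd (restrict_eq_none.1 hL a (inRel_mem h').1) (by simp [hpa])
        · exact (ihr (nodup_right hnd) hR hpa hpb).2 h'
        · exact absurd (restrict_eq_none.1 hL a ha) (by simp [hpa])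
    · cases h
      constructor
      · intro h'
        exact Or.inl ((ihl (nodup_left hnd) hL hpa hpb).1 h')
      · rintro (h' | h' | ⟨rfl, ha, hb⟩)
        · exact (ihl (nodup_left hnd) hL hpa hpb).2 h'
        · exact absurd (restrict_eq_none.1 hR a (inRel_mem h').1) (by simp [hpa])
        · exact absurd (restrict_eq_none.1 hR b hb) (by simp [hpb])
    · cases h
      simp only [inRel, ihl (nodup_left hnd) hL hpa hpb, ihr (nodup_right hnd) hR hpa hpb,
        leaves_restrict hL, leaves_restrict hR, List.mem_filter, hpa, hpb, and_true]

end W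

open W

variable {n k : ℕ}

/-- Abbreviation for the ambient space of pairs. -/
abbrev Cfg (n k : ℕ) := (Fin k → Fin n → ℝ) × (Fin k → Fin n → ℝ)

/-- max of the `j`-coordinates of `w` over the leaves of `A`. -/
noncomputable def maxV : W n k → (Fin k → Fin n → ℝ) → Fin n → ℝ
  | W.leaf a, w, j => w a j
  | W.node _ L R, w, j => max (maxV L w j) (maxV R w j)

noncomputable def minU : W n k → (Fin k → Fin n → ℝ) → Fin n → ℝ
  | W.leaf a, w, j => w a j
  | W.node _ L R, w, j => min (minU L w j) (minU R w j)

theorem le_maxV {A : W n k} {w : Fin k → Fin n → ℝ} {j : Fin n} {a : Fin k}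
    (ha : a ∈ A.leaves) : w a j ≤ maxV A w j := by
  induction A with
  | leaf c => simp [W.leaves] at ha; subst ha; simp [maxV]
  | node i L R ihl ihr =>
    rcases List.mem_append.1 ha with h | h
    · exact (ihl h).trans (le_max_left _ _)
    · exact (ihr h).trans (le_max_right _ _)

theorem minU_le {A : W n k} {w : Fin k → Fin n → ℝ} {j : Fin n} {a : Fin k}
    (ha : a ∈ A.leaves) : minU A w j ≤ w a j := by
  induction A with
  | leaf c => simp [W.leaves] at ha; subst ha; simp [minU]
  | node i L R ihl ihr =>
    rcases List.mem_append.1 ha with h | h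
    · exact (min_le_left _ _).trans (ihl h)
    · exact (min_le_right _ _).trans (ihr h)

theorem maxV_le {A : W n k} {w : Fin k → Fin n → ℝ} {j : Fin n} {x : ℝ}
    (h : ∀ a ∈ A.leaves, w a j ≤ x) : maxV A w j ≤ x := by
  induction A with
  | leaf c => exact h c (by simp [W.leaves])
  | node i L R ihl ihr =>
    exact max_le (ihl fun a ha => h a (List.mem_append_left _ ha))
      (ihr fun a ha => h a (List.mem_append_right _ ha))

theorem le_minU {A : W n k} {w : Fin k → Fin n → ℝ} {j : Fin n} {x : ℝ}
    (h : ∀ a ∈ A.leaves, x ≤ w a j) : x ≤ minU A w j := by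
  induction A with
  | leaf c => exact h c (by simp [W.leaves])
  | node i L R ihl ihr =>
    exact le_min (ihl fun a ha => h a (List.mem_append_left _ ha))
      (ihr fun a ha => h a (List.mem_append_right _ ha))

theorem maxV_mem (A : W n k) (w : Fin k → Fin n → ℝ) (j : Fin n) :
    ∃ a ∈ A.leaves, maxV A w j = w a j := by
  induction A with
  | leaf c => exact ⟨c, by simp [W.leaves], rfl⟩
  | node i L R ihl ihr =>
    obtain ⟨a, ha, hA⟩ := ihl; obtain ⟨b, hb, hB⟩ := ihr
    rcases le_total (maxV L w j) (maxV R w j) with h | h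
    · exact ⟨b, List.mem_append_right _ hb, by rw [maxV, max_eq_right h, hB]⟩
    · exact ⟨a, List.mem_append_left _ ha, by rw [maxV, max_eq_left h, hA]⟩

theorem minU_mem (A : W n k) (w : Fin k → Fin n → ℝ) (j : Fin n) :
    ∃ a ∈ A.leaves, minU A w j = w a j := by
  induction A with
  | leaf c => exact ⟨c, by simp [W.leaves], rfl⟩
  | node i L R ihl ihr =>
    obtain ⟨a, ha, hA⟩ := ihl; obtain ⟨b, hb, hB⟩ := ihr
    rcases le_total (minU L w j) (minU R w j) with h | h
    · exact ⟨a, List.mem_append_left _ ha, by rw [minU, min_eq_left h, hA]⟩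
    · exact ⟨b, List.mem_append_right _ hb, by rw [minU, min_eq_right h, hB]⟩

theorem continuous_maxV (A : W n k) (j : Fin n) :
    Continuous fun w : Fin k → Fin n → ℝ => maxV A w j := by
  induction A with
  | leaf c => exact (continuous_apply j).comp (continuous_apply c)
  | node i L R ihl ihr => exact ihl.max ihr

theorem continuous_minU (A : W n k) (j : Fin n) :
    Continuous fun w : Fin k → Fin n → ℝ => minU A w j := by
  induction A with
  | leaf c => exact (continuous_apply j).comp (continuous_apply c)
  | node i L R ihl ihr => exact ihl.min ihr

/-- Affine map with fixed point `p` and slope `σ`. -/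
def stretch (p σ y : ℝ) : ℝ := p + σ * (y - p)

theorem stretch_one (p y : ℝ) : stretch p 1 y = y := by simp [stretch]

theorem stretch_mono {p σ : ℝ} (hσ : 0 < σ) {y z : ℝ} (h : y ≤ z) :
    stretch p σ y ≤ stretch p σ z := by
  simp only [stretch]
  nlinarith

theorem stretch_strictMono {p σ : ℝ} (hσ : 0 < σ) {y z : ℝ} (h : y < z) :
    stretch p σ y < stretch p σ z := by
  simp only [stretch]; nlinarith

theorem stretch_le_self {p σ : ℝ} (hσ : σ ≤ 1) {y : ℝ} (h : p ≤ y) :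
    stretch p σ y ≤ y := by simp only [stretch]; nlinarith

theorem self_le_stretch {p σ : ℝ} (hσ : σ ≤ 1) {y : ℝ} (h : y ≤ p) :
    y ≤ stretch p σ y := by simp only [stretch]; nlinarith

theorem le_stretch {p σ : ℝ} (hσ : 0 ≤ σ) {y : ℝ} (h : p ≤ y) :
    p ≤ stretch p σ y := by simp only [stretch]; nlinarith

theorem stretch_le {p σ : ℝ} (hσ : 0 ≤ σ) {y : ℝ} (h : y ≤ p) :
    stretch p σ y ≤ p := by simp only [stretch]; nlinarith

open W

variable {n k : ℕ}

noncomputable def pQ (L : W n k) (c : Cfg n k) (j : Fin n) : ℝ := maxV L c.2 j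
noncomputable def pR (R : W n k) (c : Cfg n k) (j : Fin n) : ℝ := minU R c.1 j
noncomputable def pM (L R : W n k) (c : Cfg n k) (j : Fin n) : ℝ :=
  (pQ L c j + pR R c j) / 2

noncomputable def sigS (j : Fin n) (L R : W n k) (α : Fin n → ℝ) (s : ℝ) (c : Cfg n k) : ℝ :=
  ((1 - s) * (max (pQ L c j) (pM L R c j) - α j) + s * (pM L R c j - α j)) /
    (max (pQ L c j) (pM L R c j) - α j)

noncomputable def sigT (j : Fin n) (L R : W n k) (β : Fin n → ℝ) (s : ℝ) (c : Cfg n k) : ℝ :=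
  ((1 - s) * (β j - min (pR R c j) (pM L R c j)) + s * (β j - pM L R c j)) /
    (β j - min (pR R c j) (pM L R c j))

noncomputable def pushCfg (j : Fin n) (L R : W n k) (α β : Fin n → ℝ) (s : ℝ) (c : Cfg n k) :
    Cfg n k :=
  (fun a i => if a ∈ L.leaves ∧ i = j then stretch (α j) (sigS j L R α s c) (c.1 a i)
    else if a ∈ R.leaves ∧ i = j then stretch (β j) (sigT j L R β s c) (c.1 a i) else c.1 a i,
   fun a i => if a ∈ L.leaves ∧ i = j then stretch (α j) (sigS j L R α s c) (c.2 a i)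
    else if a ∈ R.leaves ∧ i = j then stretch (β j) (sigT j L R β s c) (c.2 a i) else c.2 a i)

def DomP (A : W n k) (α β : Fin n → ℝ) (c : Cfg n k) : Prop :=
  (∀ i, α i < β i) ∧
    ∀ a ∈ A.leaves, ∀ i, α i ≤ c.1 a i ∧ c.1 a i < c.2 a i ∧ c.2 a i ≤ β i

def SepW (A : W n k) (c : Cfg n k) : Prop := ∀ a b i, A.inRel a b i → c.2 a i ≤ c.1 b i

def glue (L : W n k) (d e : Cfg n k) : Cfg n k :=
  (fun a => if a ∈ L.leaves then d.1 a else e.1 a,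
   fun a => if a ∈ L.leaves then d.2 a else e.2 a)

noncomputable def clampT (t : ℝ) : ℝ := min 1 (max 0 t)

theorem clampT_mem (t : ℝ) : 0 ≤ clampT t ∧ clampT t ≤ 1 :=
  ⟨le_min zero_le_one (le_max_left _ _), min_le_left _ _⟩

section NodeFacts

variable {j : Fin n} {L R : W n k} {α β : Fin n → ℝ} {c : Cfg n k}

theorem memL_node {a : Fin k} (ha : a ∈ L.leaves) : a ∈ (node j L R).leaves :=
  List.mem_append_left _ ha

theorem memR_node {a : Fin k} (ha : a ∈ R.leaves) : a ∈ (node j L R).leaves :=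
  List.mem_append_right _ ha

theorem pQ_lt (hdom : DomP (node j L R) α β c) : α j < pQ L c j := by
  obtain ⟨a, ha, hA⟩ := maxV_mem L c.2 j
  have h := hdom.2 a (memL_node ha) j
  rw [pQ, hA]; exact lt_of_le_of_lt h.1 h.2.1

theorem pQ_le (hdom : DomP (node j L R) α β c) : pQ L c j ≤ β j :=
  maxV_le fun a ha => (hdom.2 a (memL_node ha) j).2.2

theorem pR_le (hdom : DomP (node j L R) α β c) : α j ≤ pR R c j :=
  le_minU fun a ha => (hdom.2 a (memR_node ha) j).1

theorem pR_lt (hdom : DomP (node j L R) α β c) : pR R c j < β j := by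
  obtain ⟨a, ha, hA⟩ := minU_mem R c.1 j
  have h := hdom.2 a (memR_node ha) j
  rw [pR, hA]; exact lt_of_lt_of_le h.2.1 h.2.2

theorem pM_gt (hdom : DomP (node j L R) α β c) : α j < pM L R c j := by
  have h1 := pQ_lt hdom; have h2 := pR_le hdom; rw [pM]; linarith

theorem pM_lt (hdom : DomP (node j L R) α β c) : pM L R c j < β j := by
  have h1 := pQ_le hdom; have h2 := pR_lt hdom; rw [pM]; linarith

theorem qs_gt (hdom : DomP (node j L R) α β c) :
    α j < max (pQ L c j) (pM L R c j) :=
  lt_of_lt_of_le (pQ_lt hdom) (le_max_left _ _)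

theorem qs_le (hdom : DomP (node j L R) α β c) :
    max (pQ L c j) (pM L R c j) ≤ β j :=
  max_le (pQ_le hdom) (le_of_lt (pM_lt hdom))

theorem rs_lt (hdom : DomP (node j L R) α β c) :
    min (pR R c j) (pM L R c j) < β j :=
  lt_of_le_of_lt (min_le_left _ _) (pR_lt hdom)

theorem rs_ge (hdom : DomP (node j L R) α β c) :
    α j ≤ min (pR R c j) (pM L R c j) :=
  le_min (pR_le hdom) (le_of_lt (pM_gt hdom))

theorem sigS_pos (hdom : DomP (node j L R) α β c) {s : ℝ} (h0 : 0 ≤ s) (h1 : s ≤ 1) :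
    0 < sigS j L R α s c := by
  have hq := qs_gt hdom; have hm := pM_gt hdom
  apply div_pos _ (by linarith)
  rcases lt_or_ge s 1 with hs | hs
  · nlinarith
  · have hseq : s = 1 := le_antisymm h1 hs
    subst hseq; nlinarith

theorem sigS_le_one (hdom : DomP (node j L R) α β c) {s : ℝ} (h0 : 0 ≤ s) (h1 : s ≤ 1) :
    sigS j L R α s c ≤ 1 := by
  have hq := qs_gt hdom
  have hm : pM L R c j ≤ max (pQ L c j) (pM L R c j) := le_max_right _ _
  rw [sigS, div_le_one (by linarith)]
  nlinarith

theorem sigT_pos (hdom : DomP (node j L R) α β c) {s : ℝ} (h0 : 0 ≤ s) (h1 : s ≤ 1) :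
    0 < sigT j L R β s c := by
  have hq := rs_lt hdom; have hm := pM_lt hdom
  apply div_pos _ (by linarith)
  rcases lt_or_ge s 1 with hs | hs
  · nlinarith
  · have hseq : s = 1 := le_antisymm h1 hs
    subst hseq; nlinarith

theorem sigT_le_one (hdom : DomP (node j L R) α β c) {s : ℝ} (h0 : 0 ≤ s) (h1 : s ≤ 1) :
    sigT j L R β s c ≤ 1 := by
  have hq := rs_lt hdom
  have hm : min (pR R c j) (pM L R c j) ≤ pM L R c j := min_le_right _ _
  rw [sigT, div_le_one (by linarith)]
  nlinarith

theorem push_fst_L {s : ℝ} {a : Fin k} (ha : a ∈ L.leaves) {i : Fin n} (hi : i = j) :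
    (pushCfg j L R α β s c).1 a i = stretch (α j) (sigS j L R α s c) (c.1 a i) := by
  simp [pushCfg, ha, hi]

theorem push_snd_L {s : ℝ} {a : Fin k} (ha : a ∈ L.leaves) {i : Fin n} (hi : i = j) :
    (pushCfg j L R α β s c).2 a i = stretch (α j) (sigS j L R α s c) (c.2 a i) := by
  simp [pushCfg, ha, hi]

theorem push_fst_R {s : ℝ} {a : Fin k} (ha : a ∈ R.leaves) (ha' : a ∉ L.leaves)
    {i : Fin n} (hi : i = j) :
    (pushCfg j L R α β s c).1 a i = stretch (β j) (sigT j L R β s c) (c.1 a i) := by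
  simp [pushCfg, ha, ha', hi]

theorem push_snd_R {s : ℝ} {a : Fin k} (ha : a ∈ R.leaves) (ha' : a ∉ L.leaves)
    {i : Fin n} (hi : i = j) :
    (pushCfg j L R α β s c).2 a i = stretch (β j) (sigT j L R β s c) (c.2 a i) := by
  simp [pushCfg, ha, ha', hi]

theorem push_fst_ne {s : ℝ} {a : Fin k} {i : Fin n} (hi : i ≠ j) :
    (pushCfg j L R α β s c).1 a i = c.1 a i := by simp [pushCfg, hi]

theorem push_snd_ne {s : ℝ} {a : Fin k} {i : Fin n} (hi : i ≠ j) :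
    (pushCfg j L R α β s c).2 a i = c.2 a i := by simp [pushCfg, hi]

theorem push_fst_out {s : ℝ} {a : Fin k} (h1 : a ∉ L.leaves) (h2 : a ∉ R.leaves) {i : Fin n} :
    (pushCfg j L R α β s c).1 a i = c.1 a i := by simp [pushCfg, h1, h2]

theorem push_snd_out {s : ℝ} {a : Fin k} (h1 : a ∉ L.leaves) (h2 : a ∉ R.leaves) {i : Fin n} :
    (pushCfg j L R α β s c).2 a i = c.2 a i := by simp [pushCfg, h1, h2]

end NodeFacts

section PushMain

variable {j : Fin n} {L R : W n k} {α β : Fin n → ℝ} {c : Cfg n k}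

theorem push_domP (hdom : DomP (node j L R) α β c) {s : ℝ} (h0 : 0 ≤ s) (h1 : s ≤ 1) :
    DomP (node j L R) α β (pushCfg j L R α β s c) := by
  refine ⟨hdom.1, fun a ha i => ?_⟩
  by_cases hij : i = j
  · subst hij
    have hc := hdom.2 a ha i
    by_cases haL : a ∈ L.leaves
    · rw [push_fst_L haL rfl, push_snd_L haL rfl]
      refine ⟨le_stretch (sigS_pos hdom h0 h1).le hc.1,
        stretch_strictMono (sigS_pos hdom h0 h1) hc.2.1, ?_⟩
      exact (stretch_le_self (sigS_le_one hdom h0 h1) (hc.1.trans hc.2.1.le)).trans hc.2.2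
    · have haR : a ∈ R.leaves := (List.mem_append.1 ha).resolve_left haL
      rw [push_fst_R haR haL rfl, push_snd_R haR haL rfl]
      refine ⟨hc.1.trans (self_le_stretch (sigT_le_one hdom h0 h1) (hc.2.1.le.trans hc.2.2)),
        stretch_strictMono (sigT_pos hdom h0 h1) hc.2.1,
        stretch_le (sigT_pos hdom h0 h1).le hc.2.2⟩
  · rw [push_fst_ne hij, push_snd_ne hij]
    exact hdom.2 a ha i

theorem push_domP_L (hdom : DomP (node j L R) α β c) {d : Cfg n k}
    (hd : DomP (node j L R) α β d) :
    DomP L α (Function.update β j (max (pM L R c j) (pQ L d j))) d := by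
  constructor
  · intro i
    rcases eq_or_ne i j with rfl | hij
    · rw [Function.update_self]
      exact lt_of_lt_of_le (pM_gt hdom) (le_max_left _ _)
    · rw [Function.update_of_ne hij]; exact hdom.1 i
  · intro a ha i
    have hc := hd.2 a (memL_node ha) i
    rcases eq_or_ne i j with rfl | hij
    · rw [Function.update_self]
      exact ⟨hc.1, hc.2.1, le_trans (le_maxV ha) (le_max_right _ _)⟩
    · rw [Function.update_of_ne hij]; exact hc

theorem push_domP_R (hdom : DomP (node j L R) α β c) {d : Cfg n k}
    (hd : DomP (node j L R) α β d) :
    DomP R (Function.update α j (min (pM L R c j) (pR R d j))) β d := by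
  constructor
  · intro i
    rcases eq_or_ne i j with rfl | hij
    · rw [Function.update_self]
      exact lt_of_le_of_lt (min_le_left _ _) (pM_lt hdom)
    · rw [Function.update_of_ne hij]; exact hdom.1 i
  · intro a ha i
    have hc := hd.2 a (memR_node ha) i
    rcases eq_or_ne i j with rfl | hij
    · rw [Function.update_self]
      exact ⟨le_trans (min_le_right _ _) (minU_le ha), hc.2.1, hc.2.2⟩
    · rw [Function.update_of_ne hij]; exact hc

theorem push_sep (hdom : DomP (node j L R) α β c) (hnd : (node j L R).leaves.Nodup)
    {X : W n k} (hsub : ∀ e ∈ X.leaves, e ∈ (node j L R).leaves)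
    (hXle : X.le (node j L R)) (hsep : SepW X c) {s : ℝ} (h0 : 0 ≤ s) (h1 : s ≤ 1) :
    SepW X (pushCfg j L R α β s c) := by
  intro a b i hx
  have hab := hsep a b i hx
  by_cases hij : i = j
  · subst hij
    have ha := hsub a (inRel_mem hx).1
    have hb := hsub b (inRel_mem hx).2
    rcases List.mem_append.1 ha with haL | haR <;> rcases List.mem_append.1 hb with hbL | hbR
    · rw [push_snd_L haL rfl, push_fst_L hbL rfl]
      exact stretch_mono (sigS_pos hdom h0 h1) hab
    · have hbL' : b ∉ L.leaves := fun h => nodup_disj hnd b h hbR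
      rw [push_snd_L haL rfl, push_fst_R hbR hbL' rfl]
      have hca := hdom.2 a (memL_node haL) i
      have hcb := hdom.2 b (memR_node hbR) i
      calc stretch (α i) (sigS i L R α s c) (c.2 a i)
          ≤ c.2 a i := stretch_le_self (sigS_le_one hdom h0 h1) (hca.1.trans hca.2.1.le)
        _ ≤ c.1 b i := hab
        _ ≤ stretch (β i) (sigT i L R β s c) (c.1 b i) :=
            self_le_stretch (sigT_le_one hdom h0 h1) (hcb.2.1.le.trans hcb.2.2)
    · -- impossible case
      exfalso
      have haL' : a ∉ L.leaves := fun h => nodup_disj hnd a h haR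
      have hbR' : b ∉ R.leaves := fun h => nodup_disj hnd b hbL h
      have hab' : a ≠ b := fun he => hbR' (he ▸ haR)
      obtain ⟨j', hca⟩ := hXle a b hab' i hx
      rcases hca with ⟨hj', hrel⟩ | ⟨hj', hrel⟩
      · rcases hrel with h | h | ⟨_, hL, _⟩
        · exact haL' (inRel_mem h).1
        · exact hbR' (inRel_mem h).2
        · exact haL' hL
      · rcases hrel with h | h | ⟨hjj, _, haR2⟩
        · exact haL' (inRel_mem h).2
        · exact hbR' (inRel_mem h).1
        · exact lt_irrefl _ (hjj ▸ hj')
    · have haL' : a ∉ L.leaves := fun h => nodup_disj hnd a h haR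
      have hbL' : b ∉ L.leaves := fun h => nodup_disj hnd b h hbR
      rw [push_snd_R haR haL' rfl, push_fst_R hbR hbL' rfl]
      exact stretch_mono (sigT_pos hdom h0 h1) hab
  · rw [push_snd_ne hij, push_fst_ne hij]
    exact hab

theorem pQ_le_pR (hsep : SepW (node j L R) c) : pQ L c j ≤ pR R c j :=
  maxV_le fun a ha => le_minU fun b hb =>
    hsep a b j (Or.inr (Or.inr ⟨rfl, ha, hb⟩))

theorem push_id (hdom : DomP (node j L R) α β c) (hsep : SepW (node j L R) c) (s : ℝ) :
    pushCfg j L R α β s c = c := by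
  have hqr := pQ_le_pR (j := j) (L := L) (R := R) (c := c) hsep
  have hmax : max (pQ L c j) (pM L R c j) = pM L R c j := max_eq_right (by rw [pM]; linarith)
  have hmin : min (pR R c j) (pM L R c j) = pM L R c j := min_eq_right (by rw [pM]; linarith)
  have hm := pM_gt hdom
  have hm' := pM_lt hdom
  have hS : sigS j L R α s c = 1 := by
    rw [sigS, hmax, div_eq_one_iff_eq (by linarith)]; ring
  have hT : sigT j L R β s c = 1 := by
    rw [sigT, hmin, div_eq_one_iff_eq (by linarith)]; ring
  refine Prod.ext ?_ ?_ <;> funext a i <;>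
    simp only [pushCfg, hS, hT, stretch_one] <;> split_ifs <;> rfl

theorem push_zero (hdom : DomP (node j L R) α β c) : pushCfg j L R α β 0 c = c := by
  have h1 := qs_gt hdom
  have h2 := rs_lt hdom
  have hS : sigS j L R α 0 c = 1 := by
    rw [sigS, div_eq_one_iff_eq (by linarith)]; ring
  have hT : sigT j L R β 0 c = 1 := by
    rw [sigT, div_eq_one_iff_eq (by linarith)]; ring
  refine Prod.ext ?_ ?_ <;> funext a i <;>
    simp only [pushCfg, hS, hT, stretch_one] <;> split_ifs <;> rfl

theorem push_one_L (hdom : DomP (node j L R) α β c) {a : Fin k} (ha : a ∈ L.leaves) :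
    (pushCfg j L R α β 1 c).2 a j ≤ pM L R c j := by
  rw [push_snd_L ha rfl]
  have hq := qs_gt hdom
  have hσpos := sigS_pos hdom zero_le_one le_rfl
  have hv : c.2 a j ≤ max (pQ L c j) (pM L R c j) :=
    le_trans (le_maxV ha) (le_max_left _ _)
  have hne : max (pQ L c j) (pM L R c j) - α j ≠ 0 := by
    intro h; linarith [hq]
  have key : stretch (α j) (sigS j L R α 1 c) (max (pQ L c j) (pM L R c j))
      = pM L R c j := by
    rw [stretch, sigS]
    field_simp
    ring
  calc stretch (α j) (sigS j L R α 1 c) (c.2 a j)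
      ≤ stretch (α j) (sigS j L R α 1 c) (max (pQ L c j) (pM L R c j)) :=
        stretch_mono hσpos hv
    _ = pM L R c j := key

theorem push_one_R (hdom : DomP (node j L R) α β c) {b : Fin k} (hb : b ∈ R.leaves)
    (hb' : b ∉ L.leaves) :
    pM L R c j ≤ (pushCfg j L R α β 1 c).1 b j := by
  rw [push_fst_R hb hb' rfl]
  have hr := rs_lt hdom
  have hσpos := sigT_pos hdom zero_le_one le_rfl
  have hu : min (pR R c j) (pM L R c j) ≤ c.1 b j :=
    le_trans (min_le_left _ _) (minU_le hb)
  have hne : β j - min (pR R c j) (pM L R c j) ≠ 0 := by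
    intro h; linarith [hr]
  have key : stretch (β j) (sigT j L R β 1 c) (min (pR R c j) (pM L R c j))
      = pM L R c j := by
    rw [stretch, sigT]
    field_simp
    ring
  calc pM L R c j
      = stretch (β j) (sigT j L R β 1 c) (min (pR R c j) (pM L R c j)) := key.symm
    _ ≤ stretch (β j) (sigT j L R β 1 c) (c.1 b j) := stretch_mono hσpos hu

end PushMain

open W

variable {n k : ℕ}

theorem glue_fst_L {L : W n k} {d e : Cfg n k} {a : Fin k} (ha : a ∈ L.leaves) :
    (glue L d e).1 a = d.1 a := by simp [glue, ha]

theorem glue_snd_L {L : W n k} {d e : Cfg n k} {a : Fin k} (ha : a ∈ L.leaves) :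
    (glue L d e).2 a = d.2 a := by simp [glue, ha]

theorem glue_fst_R {L : W n k} {d e : Cfg n k} {a : Fin k} (ha : a ∉ L.leaves) :
    (glue L d e).1 a = e.1 a := by simp [glue, ha]

theorem glue_snd_R {L : W n k} {d e : Cfg n k} {a : Fin k} (ha : a ∉ L.leaves) :
    (glue L d e).2 a = e.2 a := by simp [glue, ha]

theorem glue_self (L : W n k) (d : Cfg n k) : glue L d d = d := by
  refine Prod.ext ?_ ?_ <;> funext a <;> simp [glue] <;> split_ifs <;> rfl

noncomputable def defH : W n k → (Fin n → ℝ) → (Fin n → ℝ) → Cfg n k → ℝ → Cfg n k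
  | W.leaf _, _, _, c, _ => c
  | W.node j L R, α, β, c, t =>
    let c1 := pushCfg j L R α β (min (2 * clampT t) 1) c
    glue L
      (defH L α (Function.update β j (max (pM L R c j) (pQ L c1 j))) c1 (2 * clampT t - 1))
      (defH R (Function.update α j (min (pM L R c j) (pR R c1 j))) β c1 (2 * clampT t - 1))

theorem defH_leaf (a : Fin k) (α β : Fin n → ℝ) (c : Cfg n k) (t : ℝ) :
    defH (W.leaf a) α β c t = c := rfl

theorem defH_node (j : Fin n) (L R : W n k) (α β : Fin n → ℝ) (c : Cfg n k) (t : ℝ) :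
    defH (W.node j L R) α β c t =
      glue L
        (defH L α
          (Function.update β j
            (max (pM L R c j) (pQ L (pushCfg j L R α β (min (2 * clampT t) 1) c) j)))
          (pushCfg j L R α β (min (2 * clampT t) 1) c) (2 * clampT t - 1))
        (defH R
          (Function.update α j
            (min (pM L R c j) (pR R (pushCfg j L R α β (min (2 * clampT t) 1) c) j)))
          β (pushCfg j L R α β (min (2 * clampT t) 1) c) (2 * clampT t - 1)) := rfl

theorem s1_mem (t : ℝ) : 0 ≤ min (2 * clampT t) 1 ∧ min (2 * clampT t) 1 ≤ 1 :=
  ⟨le_min (by have := (clampT_mem t).1; linarith) zero_le_one, min_le_right _ _⟩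

theorem clampT_nonpos {t : ℝ} (ht : t ≤ 0) : clampT t = 0 := by
  rw [clampT, max_eq_left ht, min_eq_right zero_le_one]

theorem clampT_ge_one {t : ℝ} (ht : 1 ≤ t) : clampT t = 1 := by
  rw [clampT, max_eq_right (by linarith), min_eq_left ht]

theorem defH_nonpos (A : W n k) {α β : Fin n → ℝ} {c : Cfg n k} (hdom : DomP A α β c)
    {t : ℝ} (ht : t ≤ 0) : defH A α β c t = c := by
  induction A generalizing α β c t with
  | leaf a => rfl
  | node j L R ihl ihr =>
    rw [defH_node, clampT_nonpos ht]
    norm_num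
    rw [push_zero hdom]
    rw [ihl (push_domP_L hdom hdom) (by norm_num), ihr (push_domP_R hdom hdom) (by norm_num),
      glue_self]

theorem defH_dom (A : W n k) {α β : Fin n → ℝ} {c : Cfg n k} (hdom : DomP A α β c) (t : ℝ) :
    DomP A α β (defH A α β c t) := by
  induction A generalizing α β c t with
  | leaf a => exact hdom
  | node j L R ihl ihr =>
    rw [defH_node]
    have hs1 := s1_mem t
    have hc1 : DomP (node j L R) α β (pushCfg j L R α β (min (2 * clampT t) 1) c) :=
      push_domP hdom hs1.1 hs1.2
    have hdomL := push_domP_L hdom hc1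
    have hdomR := push_domP_R hdom hc1
    have hL := ihl hdomL (2 * clampT t - 1)
    have hR := ihr hdomR (2 * clampT t - 1)
    refine ⟨hdom.1, fun a ha i => ?_⟩
    rcases List.mem_append.1 ha with haL | haR
    · rw [glue_fst_L haL, glue_snd_L haL]
      have h := hL.2 a haL i
      rcases eq_or_ne i j with rfl | hij
      · rw [Function.update_self] at h
        refine ⟨h.1, h.2.1, h.2.2.trans ?_⟩
        exact max_le (pM_lt hdom).le (pQ_le hc1)
      · rw [Function.update_of_ne hij] at h; exact h
    · by_cases haL : a ∈ L.leaves
      · rw [glue_fst_L haL, glue_snd_L haL]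
        have h := hL.2 a haL i
        rcases eq_or_ne i j with rfl | hij
        · rw [Function.update_self] at h
          refine ⟨h.1, h.2.1, h.2.2.trans ?_⟩
          exact max_le (pM_lt hdom).le (pQ_le hc1)
        · rw [Function.update_of_ne hij] at h; exact h
      · rw [glue_fst_R haL, glue_snd_R haL]
        have h := hR.2 a haR i
        rcases eq_or_ne i j with rfl | hij
        · rw [Function.update_self] at h
          refine ⟨le_trans ?_ h.1, h.2.1, h.2.2⟩
          exact le_min (pM_gt hdom).le (pR_le hc1)
        · rw [Function.update_of_ne hij] at h; exact h

theorem defH_id (A : W n k) {α β : Fin n → ℝ} {c : Cfg n k} (hdom : DomP A α β c)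
    (hsep : SepW A c) (t : ℝ) : defH A α β c t = c := by
  induction A generalizing α β c t with
  | leaf a => rfl
  | node j L R ihl ihr =>
    rw [defH_node, push_id hdom hsep]
    have hsepL : SepW L c := fun a b i h => hsep a b i (Or.inl h)
    have hsepR : SepW R c := fun a b i h => hsep a b i (Or.inr (Or.inl h))
    rw [ihl (push_domP_L hdom hdom) hsepL, ihr (push_domP_R hdom hdom) hsepR, glue_self]

theorem defH_one (A : W n k) {α β : Fin n → ℝ} {c : Cfg n k} (hdom : DomP A α β c)
    (hnd : A.leaves.Nodup) {t : ℝ} (ht : 1 ≤ t) : SepW A (defH A α β c t) := by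
  induction A generalizing α β c t with
  | leaf a => intro x y i h; exact h.elim
  | node j L R ihl ihr =>
    rw [defH_node, clampT_ge_one ht]
    have h21 : min (2 * (1:ℝ)) 1 = 1 := by norm_num
    rw [h21]
    have h211 : 2 * (1:ℝ) - 1 = 1 := by norm_num
    rw [h211]
    set c1 := pushCfg j L R α β 1 c with hc1def
    have hc1 : DomP (node j L R) α β c1 := push_domP hdom zero_le_one le_rfl
    have hmaxeq : max (pM L R c j) (pQ L c1 j) = pM L R c j :=
      max_eq_left (maxV_le fun a ha => push_one_L hdom ha)
    have hmineq : min (pM L R c j) (pR R c1 j) = pM L R c j :=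
      min_eq_left (le_minU fun b hb =>
        push_one_R hdom hb (fun h => nodup_disj hnd b h hb))
    have hdomL := push_domP_L hdom hc1
    have hdomR := push_domP_R hdom hc1
    have hLdom := defH_dom L hdomL 1
    have hRdom := defH_dom R hdomR 1
    have hLsep := ihl hdomL (nodup_left hnd) le_rfl
    have hRsep := ihr hdomR (nodup_right hnd) le_rfl
    intro a b i hrel
    rcases hrel with h | h | ⟨hji, haL, hbR⟩
    · have haL := (inRel_mem h).1
      have hbL := (inRel_mem h).2
      rw [glue_snd_L haL, glue_fst_L hbL]
      exact hLsep a b i h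
    · have haR := (inRel_mem h).1
      have hbR := (inRel_mem h).2
      have haL : a ∉ L.leaves := fun hx => nodup_disj hnd a hx haR
      have hbL : b ∉ L.leaves := fun hx => nodup_disj hnd b hx hbR
      rw [glue_snd_R haL, glue_fst_R hbL]
      exact hRsep a b i h
    · subst hji
      have hbL : b ∉ L.leaves := fun hx => nodup_disj hnd b hx hbR
      rw [glue_snd_L haL, glue_fst_R hbL]
      have h1 := (hLdom.2 a haL j).2.2
      rw [Function.update_self] at h1
      have h2 := (hRdom.2 b hbR j).1
      rw [Function.update_self] at h2
      exact (h1.trans hmaxeq.le).trans (hmineq.ge.trans h2)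

theorem defH_key (A : W n k) {α β : Fin n → ℝ} {c : Cfg n k} (hdom : DomP A α β c)
    (hnd : A.leaves.Nodup) {X : W n k} (hXnd : X.leaves.Nodup)
    (hXfin : X.leaves.toFinset = A.leaves.toFinset) (hXle : X.le A) (hsep : SepW X c)
    (t : ℝ) :
    ∃ Y : W n k, Y.leaves.Nodup ∧ Y.leaves.toFinset = A.leaves.toFinset ∧ Y.le A ∧
      SepW Y (defH A α β c t) := by
  induction A generalizing α β c t X with
  | leaf a => exact ⟨X, hXnd, hXfin, hXle, hsep⟩
  | node j L R ihl ihr =>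
    have hs1 := s1_mem t
    have hsub : ∀ e ∈ X.leaves, e ∈ (node j L R).leaves := by
      intro e he
      have : e ∈ X.leaves.toFinset := List.mem_toFinset.2 he
      rw [hXfin] at this
      exact List.mem_toFinset.1 this
    have hsub' : ∀ e ∈ (node j L R).leaves, e ∈ X.leaves := by
      intro e he
      have : e ∈ (node j L R).leaves.toFinset := List.mem_toFinset.2 he
      rw [← hXfin] at this
      exact List.mem_toFinset.1 this
    have hsep1 : SepW X (pushCfg j L R α β (min (2 * clampT t) 1) c) :=
      push_sep hdom hnd hsub hXle hsep hs1.1 hs1.2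
    rcases le_or_gt (clampT t) (1/2) with hτ | hτ
    · -- first phase: the homotopy equals the push, which preserves X
      have ht' : 2 * clampT t - 1 ≤ 0 := by linarith
      have hc1 : DomP (node j L R) α β (pushCfg j L R α β (min (2 * clampT t) 1) c) :=
        push_domP hdom hs1.1 hs1.2
      rw [defH_node, defH_nonpos L (push_domP_L hdom hc1) ht',
        defH_nonpos R (push_domP_R hdom hc1) ht', glue_self]
      exact ⟨X, hXnd, hXfin, hXle, hsep1⟩
    · -- second phase
      have hs1eq : min (2 * clampT t) 1 = 1 := min_eq_right (by linarith)
      rw [hs1eq] at hsep1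
      rw [defH_node, hs1eq]
      set c1 := pushCfg j L R α β 1 c with hc1def
      have hc1 : DomP (node j L R) α β c1 := push_domP hdom zero_le_one le_rfl
      have hmaxeq : max (pM L R c j) (pQ L c1 j) = pM L R c j :=
        max_eq_left (maxV_le fun a ha => push_one_L hdom ha)
      have hmineq : min (pM L R c j) (pR R c1 j) = pM L R c j :=
        min_eq_left (le_minU fun b hb =>
          push_one_R hdom hb (fun h => nodup_disj hnd b h hb))
      have hdomL := push_domP_L hdom hc1
      have hdomR := push_domP_R hdom hc1
      -- restrict X to the leaves of L and R
      obtain ⟨XS, hXS⟩ : ∃ XS, X.restrict (fun e => decide (e ∈ L.leaves)) = some XS := by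
        cases hres : X.restrict (fun e => decide (e ∈ L.leaves)) with
        | none =>
          exfalso
          obtain ⟨a, ha⟩ := List.exists_mem_of_ne_nil _ (leaves_ne_nil L)
          have := restrict_eq_none.1 hres a (hsub' a (memL_node ha))
          simp [ha] at this
        | some XS => exact ⟨XS, rfl⟩
      obtain ⟨XT, hXT⟩ : ∃ XT, X.restrict (fun e => decide (e ∈ R.leaves)) = some XT := by
        cases hres : X.restrict (fun e => decide (e ∈ R.leaves)) with
        | none =>
          exfalso
          obtain ⟨a, ha⟩ := List.exists_mem_of_ne_nil _ (leaves_ne_nil R)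
          have := restrict_eq_none.1 hres a (hsub' a (memR_node ha))
          simp [ha] at this
        | some XT => exact ⟨XT, rfl⟩
      have hXSlv := leaves_restrict hXS
      have hXTlv := leaves_restrict hXT
      have hXSnd : XS.leaves.Nodup := hXSlv ▸ hXnd.filter _
      have hXTnd : XT.leaves.Nodup := hXTlv ▸ hXnd.filter _
      have hXSfin : XS.leaves.toFinset = L.leaves.toFinset := by
        ext e
        rw [List.mem_toFinset, List.mem_toFinset, hXSlv, List.mem_filter]
        constructor
        · rintro ⟨-, he⟩; exact of_decide_eq_true he
        · intro he; exact ⟨hsub' e (memL_node he), decide_eq_true he⟩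
      have hXTfin : XT.leaves.toFinset = R.leaves.toFinset := by
        ext e
        rw [List.mem_toFinset, List.mem_toFinset, hXTlv, List.mem_filter]
        constructor
        · rintro ⟨-, he⟩; exact of_decide_eq_true he
        · intro he; exact ⟨hsub' e (memR_node he), decide_eq_true he⟩
      have memXS : ∀ {e}, e ∈ XS.leaves → e ∈ L.leaves := by
        intro e he
        rw [hXSlv, List.mem_filter] at he
        exact of_decide_eq_true he.2
      have memXT : ∀ {e}, e ∈ XT.leaves → e ∈ R.leaves := by
        intro e he
        rw [hXTlv, List.mem_filter] at he
        exact of_decide_eq_true he.2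
      have hXSrel : ∀ {a b : Fin k} {i : Fin n}, a ∈ L.leaves → b ∈ L.leaves →
          (XS.inRel a b i ↔ X.inRel a b i) := by
        intro a b i ha hb
        exact inRel_restrict hXnd hXS (decide_eq_true ha) (decide_eq_true hb)
      have hXTrel : ∀ {a b : Fin k} {i : Fin n}, a ∈ R.leaves → b ∈ R.leaves →
          (XT.inRel a b i ↔ X.inRel a b i) := by
        intro a b i ha hb
        exact inRel_restrict hXnd hXT (decide_eq_true ha) (decide_eq_true hb)
      have hXSle : XS.le L := by
        intro a b hab i hrel
        have haL := memXS (inRel_mem hrel).1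
        have hbL := memXS (inRel_mem hrel).2
        have hX : X.inRel a b i := (hXSrel haL hbL).1 hrel
        obtain ⟨j', hca⟩ := hXle a b hab i hX
        rcases hca with ⟨hj', hr⟩ | ⟨hj', hr⟩
        · exact ⟨j', Or.inl ⟨hj', (node_inRel_left hnd haL hbL).1 hr⟩⟩
        · exact ⟨j', Or.inr ⟨hj', (node_inRel_left hnd hbL haL).1 hr⟩⟩
      have hXTle : XT.le R := by
        intro a b hab i hrel
        have haR := memXT (inRel_mem hrel).1
        have hbR := memXT (inRel_mem hrel).2
        have hX : X.inRel a b i := (hXTrel haR hbR).1 hrel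
        obtain ⟨j', hca⟩ := hXle a b hab i hX
        rcases hca with ⟨hj', hr⟩ | ⟨hj', hr⟩
        · refine ⟨j', Or.inl ⟨hj', ?_⟩⟩
          rcases hr with h | h | ⟨_, hL, _⟩
          · exact absurd (inRel_mem h).1 (fun hx => nodup_disj hnd a hx haR)
          · exact h
          · exact absurd hL (fun hx => nodup_disj hnd a hx haR)
        · refine ⟨j', Or.inr ⟨hj', ?_⟩⟩
          rcases hr with h | h | ⟨_, hL, _⟩
          · exact absurd (inRel_mem h).1 (fun hx => nodup_disj hnd b hx hbR)
          · exact h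
          · exact absurd hL (fun hx => nodup_disj hnd b hx hbR)
      have hsepS : SepW XS c1 := by
        intro a b i hrel
        exact hsep1 a b i ((hXSrel (memXS (inRel_mem hrel).1) (memXS (inRel_mem hrel).2)).1 hrel)
      have hsepT : SepW XT c1 := by
        intro a b i hrel
        exact hsep1 a b i ((hXTrel (memXT (inRel_mem hrel).1) (memXT (inRel_mem hrel).2)).1 hrel)
      obtain ⟨YS, hYSnd, hYSfin, hYSle, hYSsep⟩ :=
        ihl hdomL (nodup_left hnd) hXSnd hXSfin hXSle hsepS (2 * clampT t - 1)
      obtain ⟨YT, hYTnd, hYTfin, hYTle, hYTsep⟩ :=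
        ihr hdomR (nodup_right hnd) hXTnd hXTfin hXTle hsepT (2 * clampT t - 1)
      have memYS : ∀ {e}, e ∈ YS.leaves → e ∈ L.leaves := by
        intro e he
        have : e ∈ YS.leaves.toFinset := List.mem_toFinset.2 he
        rw [hYSfin] at this; exact List.mem_toFinset.1 this
      have memYT : ∀ {e}, e ∈ YT.leaves → e ∈ R.leaves := by
        intro e he
        have : e ∈ YT.leaves.toFinset := List.mem_toFinset.2 he
        rw [hYTfin] at this; exact List.mem_toFinset.1 this
      refine ⟨node j YS YT, ?_, ?_, ?_, ?_⟩
      · refine List.Nodup.append hYSnd hYTnd ?_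
        intro e heS heT
        exact nodup_disj hnd e (memYS heS) (memYT heT)
      · show (YS.leaves ++ YT.leaves).toFinset = (L.leaves ++ R.leaves).toFinset
        rw [List.toFinset_append, List.toFinset_append, hYSfin, hYTfin]
      · intro a b hab i hrel
        rcases hrel with h | h | ⟨hji, haYS, hbYT⟩
        · obtain ⟨j', hca⟩ := hYSle a b hab i h
          exact ⟨j', hca.imp (fun hx => ⟨hx.1, Or.inl hx.2⟩) (fun hx => ⟨hx.1, Or.inl hx.2⟩)⟩
        · obtain ⟨j', hca⟩ := hYTle a b hab i h
          exact ⟨j', hca.imp (fun hx => ⟨hx.1, Or.inr (Or.inl hx.2)⟩)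
            (fun hx => ⟨hx.1, Or.inr (Or.inl hx.2)⟩)⟩
        · exact ⟨i, Or.inl ⟨le_refl i, Or.inr (Or.inr ⟨hji, memYS haYS, memYT hbYT⟩)⟩⟩
      · intro a b i hrel
        have hLdom := defH_dom L hdomL (2 * clampT t - 1)
        have hRdom := defH_dom R hdomR (2 * clampT t - 1)
        rcases hrel with h | h | ⟨hji, haYS, hbYT⟩
        · have haL := memYS (inRel_mem h).1
          have hbL := memYS (inRel_mem h).2
          rw [glue_snd_L haL, glue_fst_L hbL]
          exact hYSsep a b i h
        · have haR := memYT (inRel_mem h).1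
          have hbR := memYT (inRel_mem h).2
          rw [glue_snd_R (fun hx => nodup_disj hnd a hx haR),
            glue_fst_R (fun hx => nodup_disj hnd b hx hbR)]
          exact hYTsep a b i h
        · subst hji
          have haL := memYS haYS
          have hbR := memYT hbYT
          rw [glue_snd_L haL, glue_fst_R (fun hx => nodup_disj hnd b hx hbR)]
          have h1 := (hLdom.2 a haL j).2.2
          rw [Function.update_self] at h1
          have h2 := (hRdom.2 b hbR j).1
          rw [Function.update_self] at h2
          exact (h1.trans hmaxeq.le).trans (hmineq.ge.trans h2)

open W

variable {n k : ℕ}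

abbrev Amb (n k : ℕ) := ((Fin n → ℝ) × (Fin n → ℝ)) × Cfg n k × ℝ

theorem continuous_glue (L : W n k) :
    Continuous fun p : Cfg n k × Cfg n k => glue L p.1 p.2 := by
  apply Continuous.prodMk
  · apply continuous_pi
    intro a
    by_cases h : a ∈ L.leaves <;> simp only [glue, h, if_true, if_false]
    · exact (continuous_apply a).comp (continuous_fst.comp continuous_fst)
    · exact (continuous_apply a).comp (continuous_fst.comp continuous_snd)
  · apply continuous_pi
    intro a
    by_cases h : a ∈ L.leaves <;> simp only [glue, h, if_true, if_false]
    · exact (continuous_apply a).comp (continuous_snd.comp continuous_fst)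
    · exact (continuous_apply a).comp (continuous_snd.comp continuous_snd)

theorem defH_cont (A : W n k) :
    ContinuousOn (fun x : Amb n k => defH A x.1.1 x.1.2 x.2.1 x.2.2)
      {x : Amb n k | DomP A x.1.1 x.1.2 x.2.1} := by
  induction A with
  | leaf a => exact (continuous_fst.comp continuous_snd).continuousOn
  | node j L R ihl ihr =>
    have cα : Continuous fun x : Amb n k => x.1.1 := continuous_fst.comp continuous_fst
    have cβ : Continuous fun x : Amb n k => x.1.2 := continuous_snd.comp continuous_fst
    have cαj : Continuous fun x : Amb n k => x.1.1 j := (continuous_apply j).comp cα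
    have cβj : Continuous fun x : Amb n k => x.1.2 j := (continuous_apply j).comp cβ
    have cc : Continuous fun x : Amb n k => x.2.1 := continuous_fst.comp continuous_snd
    have cu : Continuous fun x : Amb n k => x.2.1.1 := continuous_fst.comp cc
    have cv : Continuous fun x : Amb n k => x.2.1.2 := continuous_snd.comp cc
    have ct : Continuous fun x : Amb n k => x.2.2 := continuous_snd.comp continuous_snd
    have cclamp : Continuous fun x : Amb n k => clampT x.2.2 := by
      simp only [clampT]
      exact continuous_const.min (continuous_const.max ct)
    have cs : Continuous fun x : Amb n k => min (2 * clampT x.2.2) 1 :=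
      (continuous_const.mul cclamp).min continuous_const
    have ct' : Continuous fun x : Amb n k => 2 * clampT x.2.2 - 1 :=
      (continuous_const.mul cclamp).sub continuous_const
    have cQ : Continuous fun x : Amb n k => pQ L x.2.1 j := (continuous_maxV L j).comp cv
    have cR : Continuous fun x : Amb n k => pR R x.2.1 j := (continuous_minU R j).comp cu
    have cM : Continuous fun x : Amb n k => pM L R x.2.1 j := by
      simp only [pM]
      exact (cQ.add cR).div_const 2
    have cqs : Continuous fun x : Amb n k => max (pQ L x.2.1 j) (pM L R x.2.1 j) := cQ.max cM
    have crs : Continuous fun x : Amb n k => min (pR R x.2.1 j) (pM L R x.2.1 j) := cR.min cM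
    set D := {x : Amb n k | DomP (node j L R) x.1.1 x.1.2 x.2.1} with hD
    have csigS : ContinuousOn
        (fun x : Amb n k => sigS j L R x.1.1 (min (2 * clampT x.2.2) 1) x.2.1) D := by
      simp only [sigS]
      apply ContinuousOn.div
      · exact (((continuous_const.sub cs).mul (cqs.sub cαj)).add
          (cs.mul (cM.sub cαj))).continuousOn
      · exact (cqs.sub cαj).continuousOn
      · intro x hx
        have := qs_gt (hx : DomP (node j L R) x.1.1 x.1.2 x.2.1)
        exact sub_ne_zero.2 this.ne'
    have csigT : ContinuousOn
        (fun x : Amb n k => sigT j L R x.1.2 (min (2 * clampT x.2.2) 1) x.2.1) D := by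
      simp only [sigT]
      apply ContinuousOn.div
      · exact (((continuous_const.sub cs).mul (cβj.sub crs)).add
          (cs.mul (cβj.sub cM))).continuousOn
      · exact (cβj.sub crs).continuousOn
      · intro x hx
        have := rs_lt (hx : DomP (node j L R) x.1.1 x.1.2 x.2.1)
        exact sub_ne_zero.2 this.ne'
    have cc1 : ContinuousOn
        (fun x : Amb n k => pushCfg j L R x.1.1 x.1.2 (min (2 * clampT x.2.2) 1) x.2.1) D := by
      apply ContinuousOn.prodMk
      · apply continuousOn_pi.2
        intro a
        apply continuousOn_pi.2
        intro i
        by_cases h1 : a ∈ L.leaves ∧ i = j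
        · simp only [if_pos h1, stretch]
          exact cαj.continuousOn.add (csigS.mul
            (((continuous_apply i).comp ((continuous_apply a).comp cu)).continuousOn.sub
              cαj.continuousOn))
        · simp only [if_neg h1]
          by_cases h2 : a ∈ R.leaves ∧ i = j
          · simp only [if_pos h2, stretch]
            exact cβj.continuousOn.add (csigT.mul
              (((continuous_apply i).comp ((continuous_apply a).comp cu)).continuousOn.sub
                cβj.continuousOn))
          · simp only [if_neg h2]
            exact ((continuous_apply i).comp ((continuous_apply a).comp cu)).continuousOn
      · apply continuousOn_pi.2
        intro a
        apply continuousOn_pi.2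
        intro i
        by_cases h1 : a ∈ L.leaves ∧ i = j
        · simp only [if_pos h1, stretch]
          exact cαj.continuousOn.add (csigS.mul
            (((continuous_apply i).comp ((continuous_apply a).comp cv)).continuousOn.sub
              cαj.continuousOn))
        · simp only [if_neg h1]
          by_cases h2 : a ∈ R.leaves ∧ i = j
          · simp only [if_pos h2, stretch]
            exact cβj.continuousOn.add (csigT.mul
              (((continuous_apply i).comp ((continuous_apply a).comp cv)).continuousOn.sub
                cβj.continuousOn))
          · simp only [if_neg h2]
            exact ((continuous_apply i).comp ((continuous_apply a).comp cv)).continuousOn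
    have cc1v : ContinuousOn
        (fun x : Amb n k =>
          (pushCfg j L R x.1.1 x.1.2 (min (2 * clampT x.2.2) 1) x.2.1).2) D :=
      continuous_snd.comp_continuousOn cc1
    have cc1u : ContinuousOn
        (fun x : Amb n k =>
          (pushCfg j L R x.1.1 x.1.2 (min (2 * clampT x.2.2) 1) x.2.1).1) D :=
      continuous_fst.comp_continuousOn cc1
    have cmS : ContinuousOn (fun x : Amb n k =>
        max (pM L R x.2.1 j)
          (pQ L (pushCfg j L R x.1.1 x.1.2 (min (2 * clampT x.2.2) 1) x.2.1) j)) D :=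
      continuous_max.comp_continuousOn
        (cM.continuousOn.prodMk ((continuous_maxV L j).comp_continuousOn cc1v))
    have cmT : ContinuousOn (fun x : Amb n k =>
        min (pM L R x.2.1 j)
          (pR R (pushCfg j L R x.1.1 x.1.2 (min (2 * clampT x.2.2) 1) x.2.1) j)) D :=
      continuous_min.comp_continuousOn
        (cM.continuousOn.prodMk ((continuous_minU R j).comp_continuousOn cc1u))
    have cupdβ : ContinuousOn (fun x : Amb n k =>
        Function.update x.1.2 j
          (max (pM L R x.2.1 j)
            (pQ L (pushCfg j L R x.1.1 x.1.2 (min (2 * clampT x.2.2) 1) x.2.1) j))) D := by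
      apply continuousOn_pi.2
      intro i'
      simp only [Function.update_apply]
      by_cases h : i' = j
      · simp only [if_pos h]; exact cmS
      · simp only [if_neg h]
        exact ((continuous_apply i').comp cβ).continuousOn
    have cupdα : ContinuousOn (fun x : Amb n k =>
        Function.update x.1.1 j
          (min (pM L R x.2.1 j)
            (pR R (pushCfg j L R x.1.1 x.1.2 (min (2 * clampT x.2.2) 1) x.2.1) j))) D := by
      apply continuousOn_pi.2
      intro i'
      simp only [Function.update_apply]
      by_cases h : i' = j
      · simp only [if_pos h]; exact cmT
      · simp only [if_neg h]
        exact ((continuous_apply i').comp cα).continuousOn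
    -- the argument maps for the recursive calls
    set ΨL : Amb n k → Amb n k := fun x =>
      ((x.1.1, Function.update x.1.2 j
          (max (pM L R x.2.1 j)
            (pQ L (pushCfg j L R x.1.1 x.1.2 (min (2 * clampT x.2.2) 1) x.2.1) j))),
        (pushCfg j L R x.1.1 x.1.2 (min (2 * clampT x.2.2) 1) x.2.1, 2 * clampT x.2.2 - 1))
      with hΨL
    set ΨR : Amb n k → Amb n k := fun x =>
      ((Function.update x.1.1 j
          (min (pM L R x.2.1 j)
            (pR R (pushCfg j L R x.1.1 x.1.2 (min (2 * clampT x.2.2) 1) x.2.1) j)), x.1.2),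
        (pushCfg j L R x.1.1 x.1.2 (min (2 * clampT x.2.2) 1) x.2.1, 2 * clampT x.2.2 - 1))
      with hΨR
    have cΨL : ContinuousOn ΨL D :=
      (cα.continuousOn.prodMk cupdβ).prodMk (cc1.prodMk ct'.continuousOn)
    have cΨR : ContinuousOn ΨR D :=
      (cupdα.prodMk cβ.continuousOn).prodMk (cc1.prodMk ct'.continuousOn)
    have hmapL : Set.MapsTo ΨL D {x : Amb n k | DomP L x.1.1 x.1.2 x.2.1} := by
      intro x hx
      have hdom : DomP (node j L R) x.1.1 x.1.2 x.2.1 := hx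
      have hs := s1_mem x.2.2
      exact push_domP_L hdom (push_domP hdom hs.1 hs.2)
    have hmapR : Set.MapsTo ΨR D {x : Amb n k | DomP R x.1.1 x.1.2 x.2.1} := by
      intro x hx
      have hdom : DomP (node j L R) x.1.1 x.1.2 x.2.1 := hx
      have hs := s1_mem x.2.2
      exact push_domP_R hdom (push_domP hdom hs.1 hs.2)
    have hdL : ContinuousOn (fun x : Amb n k =>
        defH L (ΨL x).1.1 (ΨL x).1.2 (ΨL x).2.1 (ΨL x).2.2) D :=
      ContinuousOn.comp ihl cΨL hmapL
    have hdR : ContinuousOn (fun x : Amb n k =>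
        defH R (ΨR x).1.1 (ΨR x).1.2 (ΨR x).2.1 (ΨR x).2.2) D :=
      ContinuousOn.comp ihr cΨR hmapR
    have hfinal := (continuous_glue L).comp_continuousOn (hdL.prodMk hdR)
    apply hfinal.congr
    intro x hx
    show defH (node j L R) x.1.1 x.1.2 x.2.1 x.2.2 = _
    rw [defH_node]
    rfl

open W

variable {n k : ℕ}

noncomputable def canon : W n k → (Fin n → ℝ) → (Fin n → ℝ) → Cfg n k
  | W.leaf _ => fun α β => (fun _ => α, fun _ => β)
  | W.node j L R => fun α β =>
    glue L (canon L α (Function.update β j ((α j + β j) / 2)))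
      (canon R (Function.update α j ((α j + β j) / 2)) β)

theorem canon_box (A : W n k) {α β : Fin n → ℝ} (h : ∀ i, α i < β i) :
    ∀ a i, α i ≤ (canon A α β).1 a i ∧ (canon A α β).1 a i < (canon A α β).2 a i ∧
      (canon A α β).2 a i ≤ β i := by
  induction A generalizing α β with
  | leaf c => exact fun a i => ⟨le_rfl, h i, le_rfl⟩
  | node j L R ihl ihr =>
    intro a i
    have hβ' : ∀ i', α i' < Function.update β j ((α j + β j) / 2) i' := by
      intro i'
      rcases eq_or_ne i' j with rfl | hij
      · rw [Function.update_self]; have := h i'; linarith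
      · rw [Function.update_of_ne hij]; exact h i'
    have hα' : ∀ i', Function.update α j ((α j + β j) / 2) i' < β i' := by
      intro i'
      rcases eq_or_ne i' j with rfl | hij
      · rw [Function.update_self]; have := h i'; linarith
      · rw [Function.update_of_ne hij]; exact h i'
    by_cases ha : a ∈ L.leaves
    · rw [show (canon (node j L R) α β) = _ from rfl]
      rw [canon]
      rw [glue_fst_L ha, glue_snd_L ha]
      have hh := ihl hβ' a i
      refine ⟨hh.1, hh.2.1, hh.2.2.trans ?_⟩
      rcases eq_or_ne i j with rfl | hij
      · rw [Function.update_self]; have := h i; linarith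
      · rw [Function.update_of_ne hij]
    · rw [canon, glue_fst_R ha, glue_snd_R ha]
      have hh := ihr hα' a i
      refine ⟨le_trans ?_ hh.1, hh.2.1, hh.2.2⟩
      rcases eq_or_ne i j with rfl | hij
      · rw [Function.update_self]; have := h i; linarith
      · rw [Function.update_of_ne hij]

theorem canon_sep (A : W n k) {α β : Fin n → ℝ} (h : ∀ i, α i < β i)
    (hnd : A.leaves.Nodup) : SepW A (canon A α β) := by
  induction A generalizing α β with
  | leaf c => intro a b i hrel; exact hrel.elim
  | node j L R ihl ihr =>
    have hβ' : ∀ i', α i' < Function.update β j ((α j + β j) / 2) i' := by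
      intro i'
      rcases eq_or_ne i' j with rfl | hij
      · rw [Function.update_self]; have := h i'; linarith
      · rw [Function.update_of_ne hij]; exact h i'
    have hα' : ∀ i', Function.update α j ((α j + β j) / 2) i' < β i' := by
      intro i'
      rcases eq_or_ne i' j with rfl | hij
      · rw [Function.update_self]; have := h i'; linarith
      · rw [Function.update_of_ne hij]; exact h i'
    intro a b i hrel
    rcases hrel with hr | hr | ⟨hji, haL, hbR⟩
    · have haL := (inRel_mem hr).1
      have hbL := (inRel_mem hr).2
      rw [canon, glue_snd_L haL, glue_fst_L hbL]
      exact ihl hβ' (nodup_left hnd) a b i hr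
    · have haR := (inRel_mem hr).1
      have hbR := (inRel_mem hr).2
      rw [canon, glue_snd_R (fun hx => nodup_disj hnd a hx haR),
        glue_fst_R (fun hx => nodup_disj hnd b hx hbR)]
      exact ihr hα' (nodup_right hnd) a b i hr
    · subst hji
      rw [canon, glue_snd_L haL, glue_fst_R (fun hx => nodup_disj hnd b hx hbR)]
      have h1 := (canon_box L hβ' a j).2.2
      rw [Function.update_self] at h1
      have h2 := (canon_box R hα' b j).1
      rw [Function.update_self] at h2
      exact h1.trans h2

theorem le_refl_W (A : W n k) : A.le A := fun _ _ _ i h => ⟨i, Or.inl ⟨le_rfl, h⟩⟩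

theorem mem_leaves_univ {A : W n k} (hA : A.Exact Finset.univ) (a : Fin k) :
    a ∈ A.leaves := by
  have : a ∈ A.leaves.toFinset := by rw [hA.2]; exact Finset.mem_univ a
  exact List.mem_toFinset.1 this

theorem disjoint_boxes {c : Cfg n k} {a b : Fin k} {i : Fin n} (h : c.2 a i ≤ c.1 b i) :
    Disjoint (cubeInterior n k c a) (cubeInterior n k c b) := by
  rw [Set.disjoint_left]
  intro x hxa hxb
  have h1 := (Set.mem_univ_pi.1 hxa) i
  have h2 := (Set.mem_univ_pi.1 hxb) i
  have := h1.2.trans_le (h.trans h2.1.le)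
  exact lt_irrefl _ this

theorem isConfig_of {c : Cfg n k} (hbox : ∀ a i, 0 ≤ c.1 a i ∧ c.1 a i < c.2 a i ∧ c.2 a i ≤ 1)
    {Y : W n k} (hYnd : Y.leaves.Nodup) (hYfin : Y.leaves.toFinset = Finset.univ)
    (hsep : SepW Y c) : IsConfig n k c := by
  refine ⟨hbox, fun a b hab => ?_⟩
  have ha := mem_leaves_univ ⟨hYnd, hYfin⟩ a
  have hb := mem_leaves_univ ⟨hYnd, hYfin⟩ b
  obtain ⟨i, hrel | hrel⟩ := exists_inRel hYnd ha hb hab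
  · exact disjoint_boxes (hsep a b i hrel)
  · exact (disjoint_boxes (hsep b a i hrel)).symm

theorem gset_subset_fset {A : W n k} (hA : A.Exact Finset.univ) :
    Gset n k A ⊆ Fset n k A := fun c hc =>
  Set.mem_iUnion.2 ⟨A, Set.mem_iUnion.2 ⟨⟨hA, le_refl_W A⟩, hc⟩⟩

theorem fset_elim {A : W n k} {c : Cfg n k} (hc : c ∈ Fset n k A) :
    ∃ X : W n k, (X.Exact Finset.univ ∧ X.le A) ∧ c ∈ Gset n k X := by
  obtain ⟨X, hX⟩ := Set.mem_iUnion.1 hc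
  obtain ⟨hX1, hX2⟩ := Set.mem_iUnion.1 hX
  exact ⟨X, hX1, hX2⟩

theorem domP_of_fset {A : W n k} {c : Cfg n k} (hc : c ∈ Fset n k A) :
    DomP A (fun _ => (0:ℝ)) (fun _ => (1:ℝ)) c := by
  obtain ⟨X, _, hG⟩ := fset_elim hc
  exact ⟨fun _ => one_pos, fun a _ i => (hG.1.1 a i)⟩

theorem defH_mem_fset {A : W n k} (hA : A.Exact Finset.univ) {c : Cfg n k}
    (hc : c ∈ Fset n k A) (t : ℝ) :
    defH A (fun _ => (0:ℝ)) (fun _ => (1:ℝ)) c t ∈ Fset n k A := by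
  obtain ⟨X, ⟨hXex, hXle⟩, hG⟩ := fset_elim hc
  have hdom := domP_of_fset hc
  have hXfin : X.leaves.toFinset = A.leaves.toFinset := hXex.2.trans hA.2.symm
  obtain ⟨Y, hYnd, hYfin, hYle, hYsep⟩ :=
    defH_key A hdom hA.1 hXex.1 hXfin hXle (fun a b i h => hG.2 a b i h) t
  have hbox := defH_dom A hdom t
  have hYfin' : Y.leaves.toFinset = Finset.univ := hYfin.trans hA.2
  refine Set.mem_iUnion.2 ⟨Y, Set.mem_iUnion.2 ⟨⟨⟨hYnd, hYfin'⟩, hYle⟩, ?_⟩⟩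
  refine ⟨isConfig_of (fun a i => hbox.2 a (mem_leaves_univ hA a) i) hYnd hYfin' hYsep, ?_⟩
  exact fun a b i h => hYsep a b i h

theorem combo_lt {t a b c d : ℝ} (h0 : 0 ≤ t) (h1 : t ≤ 1) (hab : a < b) (hcd : c < d) :
    (1 - t) * a + t * c < (1 - t) * b + t * d := by
  rcases lt_or_ge t 1 with ht | ht
  · nlinarith
  · have : t = 1 := le_antisymm h1 ht
    subst this; nlinarith

theorem gset_segment {A : W n k} (hA : A.Exact Finset.univ) {c d : Cfg n k}
    (hc : c ∈ Gset n k A) (hd : d ∈ Gset n k A) {t : ℝ} (h0 : 0 ≤ t) (h1 : t ≤ 1) :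
    (1 - t) • c + t • d ∈ Gset n k A := by
  have hval1 : ∀ a i, ((1 - t) • c + t • d).1 a i = (1 - t) * c.1 a i + t * d.1 a i := by
    intro a i; rfl
  have hval2 : ∀ a i, ((1 - t) • c + t • d).2 a i = (1 - t) * c.2 a i + t * d.2 a i := by
    intro a i; rfl
  have hbox : ∀ a i, 0 ≤ ((1 - t) • c + t • d).1 a i ∧
      ((1 - t) • c + t • d).1 a i < ((1 - t) • c + t • d).2 a i ∧
      ((1 - t) • c + t • d).2 a i ≤ 1 := by
    intro a i
    have h1c := hc.1.1 a i
    have h1d := hd.1.1 a i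
    rw [hval1, hval2]
    refine ⟨add_nonneg (mul_nonneg (by linarith) h1c.1) (mul_nonneg h0 h1d.1),
      combo_lt h0 h1 h1c.2.1 h1d.2.1, ?_⟩
    nlinarith [h1c.2.2, h1d.2.2]
  have hsep : SepW A ((1 - t) • c + t • d) := by
    intro a b i h
    have hsc := hc.2 a b i h
    have hsd := hd.2 a b i h
    rw [hval1, hval2]
    have e1 : (1 - t) * c.2 a i ≤ (1 - t) * c.1 b i :=
      mul_le_mul_of_nonneg_left hsc (by linarith)
    have e2 : t * d.2 a i ≤ t * d.1 b i := mul_le_mul_of_nonneg_left hsd h0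
    linarith
  exact ⟨isConfig_of hbox hA.1 hA.2 hsep, hsep⟩

theorem defH_gset {A : W n k} (hA : A.Exact Finset.univ) {c : Cfg n k}
    (hc : c ∈ Fset n k A) :
    defH A (fun _ => (0:ℝ)) (fun _ => (1:ℝ)) c 1 ∈ Gset n k A := by
  have hdom := domP_of_fset hc
  have hsep := defH_one A hdom hA.1 le_rfl
  exact ⟨isConfig_of (fun a i => (defH_dom A hdom 1).2 a (mem_leaves_univ hA a) i)
    hA.1 hA.2 hsep, hsep⟩

theorem canon_gset {A : W n k} (hA : A.Exact Finset.univ) :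
    canon A (fun _ => (0:ℝ)) (fun _ => (1:ℝ)) ∈ Gset n k A := by
  have hb : ∀ i : Fin n, (fun _ => (0:ℝ)) i < (fun _ => (1:ℝ)) i := fun _ => one_pos
  have hsep := canon_sep A hb hA.1
  exact ⟨isConfig_of (canon_box A hb) hA.1 hA.2 hsep, hsep⟩

theorem main_statement (n k : ℕ) (hn : 1 ≤ n) (hk : 1 ≤ k)
    (A : W n k) (hA : A.Exact Finset.univ) :
    (∃ r : C(↥(Fset n k A), ↥(Fset n k A)),
      (∀ x : ↥(Fset n k A),
        (r x : (Fin k → Fin n → ℝ) × (Fin k → Fin n → ℝ)) ∈ Gset n k A) ∧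
      (∀ x : ↥(Fset n k A),
        (x : (Fin k → Fin n → ℝ) × (Fin k → Fin n → ℝ)) ∈ Gset n k A → r x = x) ∧
      Nonempty ((ContinuousMap.id ↥(Fset n k A)).HomotopyRel r
        {x : ↥(Fset n k A) |
          (x : (Fin k → Fin n → ℝ) × (Fin k → Fin n → ℝ)) ∈ Gset n k A})) ∧
    ContractibleSpace ↥(Fset n k A) := by
  set F := Fset n k A with hF
  set zf : Fin n → ℝ := fun _ => 0 with hzf
  set of : Fin n → ℝ := fun _ => 1 with hof
  -- continuity of the time-1 retraction on the subtype
  have hcont1 : Continuous fun x : ↥F => defH A zf of (↑x : Cfg n k) 1 := by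
    have econt : Continuous fun x : ↥F => (((zf, of), ((↑x : Cfg n k), (1:ℝ))) : Amb n k) :=
      continuous_const.prodMk (continuous_subtype_val.prodMk continuous_const)
    exact (defH_cont A).comp_continuous econt (fun x => domP_of_fset x.2)
  set r : C(↥F, ↥F) :=
    ⟨fun x => ⟨defH A zf of (↑x : Cfg n k) 1, defH_mem_fset hA x.2 1⟩,
      hcont1.subtype_mk _⟩ with hr
  have hr1 : ∀ x : ↥F, (r x : Cfg n k) ∈ Gset n k A := fun x => defH_gset hA x.2
  have hr2 : ∀ x : ↥F, (x : Cfg n k) ∈ Gset n k A → r x = x := by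
    intro x hx
    exact Subtype.ext (defH_id A (domP_of_fset x.2) (fun a b i h => hx.2 a b i h) 1)
  -- the homotopy rel G(A) from the identity to r
  have hcontH : Continuous fun p : unitInterval × ↥F =>
      defH A zf of (↑p.2 : Cfg n k) (↑p.1 : ℝ) := by
    have econt : Continuous fun p : unitInterval × ↥F =>
        (((zf, of), ((↑p.2 : Cfg n k), (↑p.1 : ℝ))) : Amb n k) :=
      continuous_const.prodMk ((continuous_subtype_val.comp continuous_snd).prodMk
        (continuous_subtype_val.comp continuous_fst))
    exact (defH_cont A).comp_continuous econt (fun p => domP_of_fset p.2.2)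
  have hom1 : (ContinuousMap.id ↥F).HomotopyRel r
      {x : ↥F | (x : Cfg n k) ∈ Gset n k A} := by
    refine ⟨⟨⟨fun p => ⟨defH A zf of (↑p.2 : Cfg n k) (↑p.1 : ℝ),
        defH_mem_fset hA p.2.2 _⟩, hcontH.subtype_mk _⟩, ?_, ?_⟩, ?_⟩
    · intro x
      exact Subtype.ext (defH_nonpos A (domP_of_fset x.2) le_rfl)
    · intro x
      rfl
    · intro t x hx
      exact Subtype.ext (defH_id A (domP_of_fset x.2) (fun a b i h => hx.2 a b i h) _)
  -- contractibility
  have g0mem : canon A zf of ∈ Gset n k A := canon_gset hA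
  have g0F : canon A zf of ∈ F := gset_subset_fset hA g0mem
  have hom2 : ContinuousMap.Homotopy (r : C(↥F, ↥F))
      (ContinuousMap.const ↥F (⟨canon A zf of, g0F⟩ : ↥F)) := by
    refine ⟨⟨fun p => ⟨(1 - (↑p.1 : ℝ)) • ((r p.2 : Cfg n k)) + (↑p.1 : ℝ) • canon A zf of,
        gset_subset_fset hA
          (gset_segment hA (hr1 p.2) g0mem p.1.2.1 p.1.2.2)⟩, ?_⟩, ?_, ?_⟩
    · refine Continuous.subtype_mk ?_ _
      refine Continuous.add ?_ ?_
      · exact (continuous_const.sub (continuous_subtype_val.comp continuous_fst)).smul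
          (continuous_subtype_val.comp (r.continuous.comp continuous_snd))
      · exact (continuous_subtype_val.comp continuous_fst).smul continuous_const
    · intro x
      refine Subtype.ext ?_
      show (1 - ((0 : unitInterval) : ℝ)) • ((r x : Cfg n k)) + ((0 : unitInterval) : ℝ) •
        canon A zf of = (r x : Cfg n k)
      norm_num
    · intro x
      refine Subtype.ext ?_
      show (1 - ((1 : unitInterval) : ℝ)) • ((r x : Cfg n k)) + ((1 : unitInterval) : ℝ) •
        canon A zf of = canon A zf of
      norm_num
  have hnull : (ContinuousMap.id ↥F).Nullhomotopic :=
    ⟨⟨canon A zf of, g0F⟩, ⟨hom1.toHomotopy.trans hom2⟩⟩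
  exact ⟨⟨r, hr1, hr2, ⟨hom1⟩⟩, (contractible_iff_id_nullhomotopic ↥F).2 hnull⟩

/-- STATEMENT 11: `G(A)` is a strong deformation retract of `F(A)`; in particular
`F(A)` is contractible. -/
theorem Gset_strong_deformation_retract_of_Fset (n k : ℕ) (hn : 1 ≤ n) (hk : 1 ≤ k)
    (A : W n k) (hA : A.Exact Finset.univ) :
    (∃ r : C(↥(Fset n k A), ↥(Fset n k A)),
      (∀ x : ↥(Fset n k A),
        (r x : (Fin k → Fin n → ℝ) × (Fin k → Fin n → ℝ)) ∈ Gset n k A) ∧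
      (∀ x : ↥(Fset n k A),
        (x : (Fin k → Fin n → ℝ) × (Fin k → Fin n → ℝ)) ∈ Gset n k A → r x = x) ∧
      Nonempty ((ContinuousMap.id ↥(Fset n k A)).HomotopyRel r
        {x : ↥(Fset n k A) |
          (x : (Fin k → Fin n → ℝ) × (Fin k → Fin n → ℝ)) ∈ Gset n k A})) ∧
    ContractibleSpace ↥(Fset n k A) :=
  main_statement n k hn hk A hA
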